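/- Let L(X) = B₀ ⊗ I_E + Σᵢ Bᵢ ⊗ (Xᵢ - I_E) be a linear pencil with 0 ≤ Bᵢ ∈ B(K) for 1 ≤ i ≤ k and B₀ ≥ Σᵢ Bᵢ, and let e ∈ K be a unit vector. Then the function f(X) = (e ⊗ I_E) S_{e* ⊗ E}(L(X)) (e* ⊗ I_E), defined for k-tuples X of positive definite operators on a finite-dimensional E for which L(X) > 0, is operator monotone: X ≤ Y coordinatewise implies f(X) ≤ f(Y). -/

import Mathlib

open Matrix
open scoped ComplexOrder Kronecker

abbrev Mat (d : ℕ) := Matrix (Fin d) (Fin d) ℂ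

/-- Loewner order: `A ≤ B` iff `B - A` is positive semi-definite. -/
def Loewner {d : ℕ} (A B : Mat d) : Prop := (B - A).PosSemidef

/-- The linear pencil `L(X) = B₀ ⊗ I_E + Σᵢ Bᵢ ⊗ (Xᵢ - I_E)` acting on `K ⊗ E`. -/
noncomputable def pencil {p k d : ℕ} (B₀ : Mat p) (B : Fin k → Mat p)
    (X : Fin k → Mat d) : Matrix (Fin p × Fin d) (Fin p × Fin d) ℂ :=
  B₀ ⊗ₖ (1 : Mat d) + ∑ i, (B i) ⊗ₖ (X i - 1)

/-- The isometric embedding `E → K ⊗ E`, `v ↦ e ⊗ v`, as a matrix. -/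
noncomputable def embedE {p d : ℕ} (e : Fin p → ℂ) :
    Matrix (Fin p × Fin d) (Fin d) ℂ :=
  fun q j => e q.1 * (1 : Mat d) q.2 j

/-- The Schur complement of a positive definite `Z` on `K ⊗ E` pivoting on the
subspace `e ⊗ E`, compressed back to `E`: `S_{e*⊗E}(Z) = ((e ⊗ I)ᴴ Z⁻¹ (e ⊗ I))⁻¹`. -/
noncomputable def schurPivot {p d : ℕ} (e : Fin p → ℂ)
    (Z : Matrix (Fin p × Fin d) (Fin p × Fin d) ℂ) : Mat d :=
  ((embedE (d := d) e)ᴴ * Z⁻¹ * embedE (d := d) e)⁻¹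


namespace Stmt15Aux


set_option linter.unusedSectionVars false

variable {m n : Type*} [Fintype m] [Fintype n] [DecidableEq m] [DecidableEq n]

lemma conjTranspose_kronecker (A : Matrix m m ℂ) (B : Matrix n n ℂ) :
    (A ⊗ₖ B)ᴴ = Aᴴ ⊗ₖ Bᴴ := by
  ext ⟨i, j⟩ ⟨k, l⟩
  simp [conjTranspose_apply, kroneckerMap_apply, mul_comm]

lemma kronecker_posSemidef {A : Matrix m m ℂ} {B : Matrix n n ℂ}
    (hA : A.PosSemidef) (hB : B.PosSemidef) : (A ⊗ₖ B).PosSemidef := by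
  exact hA.kronecker hB

lemma posDef_conj {M : Matrix m m ℂ} (hM : M.PosDef) (C : Matrix m n ℂ)
    (hC : Function.Injective (C.mulVec)) : (Cᴴ * M * C).PosDef := by
  exact hM.conjTranspose_mul_mul_same hC

lemma exists_herm_sqrt {M : Matrix m m ℂ} (hM : M.PosDef) :
    ∃ T : Matrix m m ℂ, T.IsHermitian ∧ T * T = M ∧ IsUnit T.det := by
  open scoped MatrixOrder in
  refine ⟨CFC.sqrt M, (nonneg_iff_posSemidef.mp (CFC.sqrt_nonneg M)).isHermitian,
    CFC.sqrt_mul_sqrt_self M hM.posSemidef.nonneg, ?_⟩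
  open scoped MatrixOrder in
  have h : (CFC.sqrt M).det * (CFC.sqrt M).det = M.det := by
    rw [← det_mul, CFC.sqrt_mul_sqrt_self M hM.posSemidef.nonneg]
  have hd : M.det ≠ 0 := ne_of_gt hM.det_pos
  rw [isUnit_iff_ne_zero]
  intro h0
  rw [h0, mul_zero] at h
  exact hd h.symm

/-- Core: if `N` is PD and `N - 1` is psd, then `1 - N⁻¹` is psd. -/
lemma one_sub_inv_posSemidef {N : Matrix m m ℂ} (hN : N.PosDef)
    (h : (N - 1).PosSemidef) : (1 - N⁻¹).PosSemidef := by
  have hNdet : IsUnit N.det := isUnit_iff_ne_zero.mpr (ne_of_gt hN.det_pos)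
  obtain ⟨E, hEh, hEE, hEdet⟩ := exists_herm_sqrt hN.inv
  have hNinv : N = E⁻¹ * E⁻¹ := by
    rw [← Matrix.mul_inv_rev, hEE, Matrix.nonsing_inv_nonsing_inv _ hNdet]
  have hENE : E * N * E = 1 := by
    calc E * N * E = (E * E⁻¹) * (E⁻¹ * E) := by
          rw [hNinv]; simp only [Matrix.mul_assoc]
      _ = 1 := by
          rw [Matrix.mul_nonsing_inv _ hEdet, Matrix.nonsing_inv_mul _ hEdet,
            Matrix.one_mul]
  have key : Eᴴ * (N - 1) * E = 1 - N⁻¹ := by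
    rw [hEh.eq]
    have : E * (N - 1) * E = E * N * E - E * E := by noncomm_ring
    rw [this, hEE, hENE]
  rw [← key]
  exact h.conjTranspose_mul_mul_same E

/-- Antitonicity of inverse: `A ≤ B` (both PD) implies `B⁻¹ ≤ A⁻¹`. -/
lemma inv_anti {A B : Matrix m m ℂ} (hA : A.PosDef) (hB : B.PosDef)
    (h : (B - A).PosSemidef) : (A⁻¹ - B⁻¹).PosSemidef := by
  obtain ⟨T, hTh, hTT, hTdet⟩ := exists_herm_sqrt hA
  have hUdef : T⁻¹ = T⁻¹ := rfl
  set U := T⁻¹ with hUdef2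
  have hUh : U.IsHermitian := hTh.inv
  have hUdet : IsUnit U.det := T.isUnit_nonsing_inv_det hTdet
  have hUinj : Function.Injective U.mulVec :=
    mulVec_injective_iff_isUnit.mpr ((isUnit_iff_isUnit_det U).mpr hUdet)
  have hUAU : U * A * U = 1 := by
    rw [← hTT]
    show T⁻¹ * (T * T) * T⁻¹ = 1
    calc T⁻¹ * (T * T) * T⁻¹ = (T⁻¹ * T) * (T * T⁻¹) := by
          simp only [Matrix.mul_assoc]
      _ = 1 := by
          rw [Matrix.nonsing_inv_mul _ hTdet, Matrix.mul_nonsing_inv _ hTdet,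
            Matrix.one_mul]
  have hNdef : U * B * U = U * B * U := rfl
  set N := U * B * U with hNdef2
  have hNpd : N.PosDef := by
    have := posDef_conj hB U hUinj
    rwa [hUh.eq] at this
  have hN1 : (N - 1).PosSemidef := by
    have hc := h.conjTranspose_mul_mul_same U
    have : Uᴴ * (B - A) * U = N - 1 := by
      rw [hUh.eq, Matrix.mul_sub, Matrix.sub_mul, hUAU]
    rwa [this] at hc
  have hcore := one_sub_inv_posSemidef hNpd hN1
  have hback : Uᴴ * (1 - N⁻¹) * U = A⁻¹ - B⁻¹ := by
    rw [hUh.eq, Matrix.mul_sub, Matrix.sub_mul, Matrix.mul_one]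
    congr 1
    · show T⁻¹ * T⁻¹ = A⁻¹
      rw [← Matrix.mul_inv_rev, hTT]
    · show U * (U * B * U)⁻¹ * U = B⁻¹
      rw [Matrix.mul_inv_rev, Matrix.mul_inv_rev]
      show T⁻¹ * (T⁻¹⁻¹ * (B⁻¹ * T⁻¹⁻¹)) * T⁻¹ = B⁻¹
      calc T⁻¹ * (T⁻¹⁻¹ * (B⁻¹ * T⁻¹⁻¹)) * T⁻¹
          = (T⁻¹ * T⁻¹⁻¹) * B⁻¹ * (T⁻¹⁻¹ * T⁻¹) := by simp only [Matrix.mul_assoc]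
        _ = B⁻¹ := by
            rw [Matrix.nonsing_inv_nonsing_inv _ hTdet,
              Matrix.nonsing_inv_mul _ hTdet, Matrix.mul_nonsing_inv _ hTdet,
              Matrix.one_mul, Matrix.mul_one]
  rw [← hback]
  exact hcore.conjTranspose_mul_mul_same U


lemma kronecker_sub (A : Matrix m m ℂ) (B C : Matrix n n ℂ) :
    A ⊗ₖ (B - C) = A ⊗ₖ B - A ⊗ₖ C := by
  ext ⟨i, j⟩ ⟨k, l⟩
  simp [kroneckerMap_apply, mul_sub]

end Stmt15Aux

/-- for a linear pencil `L(X) = B₀ ⊗ I + Σ Bᵢ ⊗ (Xᵢ - I)` with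
`Bᵢ ≥ 0` and `B₀ ≥ Σ Bᵢ`, and a unit vector `e ∈ K`, the function
`f(X) = (e ⊗ I) S_{e*⊗E}(L(X)) (e* ⊗ I)`, defined for `k`-tuples `X` of
positive definite operators with `L(X) > 0`, is operator monotone. -/
theorem stmt15 (p k d : ℕ) (B₀ : Mat p) (B : Fin k → Mat p)
    (hB : ∀ i, (B i).PosSemidef) (hB₀ : (B₀ - ∑ i, B i).PosSemidef)
    (e : Fin p → ℂ) (he : star e ⬝ᵥ e = 1)
    (X Y : Fin k → Mat d)
    (hX : ∀ i, (X i).PosDef) (hY : ∀ i, (Y i).PosDef)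
    (hLX : (pencil B₀ B X).PosDef) (hLY : (pencil B₀ B Y).PosDef)
    (hXY : ∀ i, Loewner (X i) (Y i)) :
    Loewner (schurPivot e (pencil B₀ B X)) (schurPivot e (pencil B₀ B Y)) := by
  classical
  open Stmt15Aux in
  -- monotonicity of the pencil
  have hdiff : pencil B₀ B Y - pencil B₀ B X = ∑ i, (B i) ⊗ₖ (Y i - X i) := by
    unfold pencil
    have h1 : B₀ ⊗ₖ (1 : Mat d) + ∑ i, (B i) ⊗ₖ (Y i - 1) -
        (B₀ ⊗ₖ (1 : Mat d) + ∑ i, (B i) ⊗ₖ (X i - 1)) =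
        ∑ i, (B i) ⊗ₖ (Y i - 1) - ∑ i, (B i) ⊗ₖ (X i - 1) := by abel
    rw [h1, ← Finset.sum_sub_distrib]
    refine Finset.sum_congr rfl fun i _ => ?_
    rw [← kronecker_sub]
    congr 1
    abel
  have hmono : (pencil B₀ B Y - pencil B₀ B X).PosSemidef := by
    rw [hdiff]
    exact Finset.sum_induction _ Matrix.PosSemidef
      (fun a b ha hb => ha.add hb) Matrix.PosSemidef.zero
      (fun i _ => kronecker_posSemidef (hB i) (hXY i))
  -- injectivity of the embedding
  have hev : ∀ (v : Fin d → ℂ) (q : Fin p × Fin d),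
      (embedE (d := d) e *ᵥ v) q = e q.1 * v q.2 := by
    intro v q
    simp [embedE, mulVec, dotProduct, Matrix.one_apply, mul_ite,
      Finset.sum_ite_eq, ite_mul]
  have hene : e ≠ 0 := by
    intro h0
    rw [h0] at he
    simp at he
  obtain ⟨i0, hi0⟩ : ∃ i, e i ≠ 0 := by
    by_contra hc
    push_neg at hc
    exact hene (funext hc)
  have hinj : Function.Injective ((embedE (d := d) e).mulVec) := by
    intro v w hvw
    funext j
    have := congrFun hvw (i0, j)
    rw [hev, hev] at this
    exact mul_left_cancel₀ hi0 this
  -- compress the inverses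
  have hinv := inv_anti hLX hLY hmono
  have hGX : ((embedE (d := d) e)ᴴ * (pencil B₀ B X)⁻¹ * embedE e).PosDef :=
    posDef_conj hLX.inv _ hinj
  have hGY : ((embedE (d := d) e)ᴴ * (pencil B₀ B Y)⁻¹ * embedE e).PosDef :=
    posDef_conj hLY.inv _ hinj
  have hGdiff : ((embedE (d := d) e)ᴴ * (pencil B₀ B X)⁻¹ * embedE (d := d) e -
      (embedE (d := d) e)ᴴ * (pencil B₀ B Y)⁻¹ * embedE (d := d) e).PosSemidef := by
    have hc := hinv.conjTranspose_mul_mul_same (embedE (d := d) e)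
    have heq : (embedE (d := d) e)ᴴ * ((pencil B₀ B X)⁻¹ - (pencil B₀ B Y)⁻¹) *
        embedE (d := d) e = (embedE (d := d) e)ᴴ * (pencil B₀ B X)⁻¹ * embedE (d := d) e -
        (embedE (d := d) e)ᴴ * (pencil B₀ B Y)⁻¹ * embedE (d := d) e := by
      rw [Matrix.mul_sub, Matrix.sub_mul]
    rwa [heq] at hc
  exact inv_anti hGY hGX hGdiff
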